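/- Let A be a 3×3 real matrix such that A + Aᵀ is negative definite, and let p_1, p_2 ≥ 0. Then the associated semidefinite program (maximize ⟨A_3, M⟩ over M ⪰ 0 with ⟨A_1, M⟩ = −p_1 and ⟨A_2, M⟩ = −p_2) has an optimal solution M₀ with rank(M₀) ≤ 1. -/

import Mathlib

open Matrix

/-- Trace inner product on square matrices: ⟨X, Y⟩ = tr(XY). -/
noncomputable def ip {m : ℕ} (X Y : Matrix (Fin m) (Fin m) ℝ) : ℝ := (X * Y).trace

/-- For an m×m matrix `A`, the symmetric matrix `A_i = e_i a_iᵀ + a_i e_iᵀ`. -/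
noncomputable def sdpMat {m : ℕ} (A : Matrix (Fin m) (Fin m) ℝ) (i : Fin m) :
    Matrix (Fin m) (Fin m) ℝ :=
  Matrix.of fun k l => (if k = i then A i l else 0) + (if l = i then A i k else 0)

lemma ip_add_right {m : ℕ} (X Y Z : Matrix (Fin m) (Fin m) ℝ) :
    ip X (Y + Z) = ip X Y + ip X Z := by
  simp [ip, Matrix.mul_add]

lemma ip_smul_right {m : ℕ} (X Y : Matrix (Fin m) (Fin m) ℝ) (a : ℝ) :
    ip X (a • Y) = a * ip X Y := by
  simp [ip, Matrix.mul_smul]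

lemma ip_sdpMat {m : ℕ} (A M : Matrix (Fin m) (Fin m) ℝ) (i : Fin m) :
    ip (sdpMat A i) M = ∑ l, A i l * (M l i + M i l) := by
  simp only [ip, sdpMat, Matrix.trace, Matrix.diag, Matrix.mul_apply, Matrix.of_apply]
  rw [Finset.sum_comm]
  simp [add_mul, Finset.sum_add_distrib, ite_mul, mul_add, Finset.mul_sum]

lemma sum_ip_sdpMat (A M : Matrix (Fin 3) (Fin 3) ℝ) :
    ip (sdpMat A 0) M + ip (sdpMat A 1) M + ip (sdpMat A 2) M = ((A + Aᵀ) * M).trace := by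
  have h : ∀ i, ip (sdpMat A i) M = ∑ l, A i l * (M l i + M i l) := ip_sdpMat A M
  have hr : ((A + Aᵀ) * M).trace = ∑ i, ∑ l, A i l * (M l i + M i l) := by
    simp only [Matrix.trace, Matrix.diag, Matrix.mul_apply, Matrix.add_apply,
      Matrix.transpose_apply, add_mul, Finset.sum_add_distrib, mul_add]
    congr 1
    exact Finset.sum_comm (f := fun x x1 => A x1 x * M x1 x)
  rw [hr, Fin.sum_univ_three, h 0, h 1, h 2]

lemma psd_diag_nonneg {m : ℕ} {M : Matrix (Fin m) (Fin m) ℝ} (hM : M.PosSemidef) (i : Fin m) :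
    0 ≤ M i i := by
  have := hM.dotProduct_mulVec_nonneg (Pi.single i 1)
  simpa [dotProduct, mulVec, Pi.single_apply] using this

lemma psd_symm_entry {m : ℕ} {M : Matrix (Fin m) (Fin m) ℝ} (hM : M.IsHermitian) (i j : Fin m) :
    M j i = M i j := by
  conv_lhs => rw [← hM]
  simp [conjTranspose_apply]

lemma psd_trace_mul_nonneg {m : ℕ} {S M : Matrix (Fin m) (Fin m) ℝ}
    (hS : S.PosSemidef) (hM : M.PosSemidef) : 0 ≤ (S * M).trace := by
  have hH := hS.1
  set U : Matrix (Fin m) (Fin m) ℝ := (hH.eigenvectorUnitary : Matrix (Fin m) (Fin m) ℝ) with hUdef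
  have h1 : S = U * diagonal (RCLike.ofReal ∘ hH.eigenvalues) * star U := by
    conv_lhs => rw [hH.spectral_theorem, Unitary.conjStarAlgAut_apply]
  have h2 : (star U * M * U).PosSemidef := by
    have h3 := hM.conjTranspose_mul_mul_same U
    rwa [← Matrix.star_eq_conjTranspose] at h3
  rw [h1, Matrix.mul_assoc, Matrix.mul_assoc, Matrix.trace_mul_comm, Matrix.mul_assoc]
  simp only [Matrix.trace, Matrix.diag, Matrix.diagonal_mul, Function.comp]
  exact Finset.sum_nonneg fun i _ => mul_nonneg (hS.eigenvalues_nonneg i) (psd_diag_nonneg h2 i)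

lemma exists_eps {m : ℕ} [NeZero m] {S : Matrix (Fin m) (Fin m) ℝ} (hS : S.PosDef) :
    ∃ ε : ℝ, 0 < ε ∧ (S - ε • 1).PosSemidef := by
  have hH := hS.1
  obtain ⟨i₀, hi₀⟩ := Finset.exists_min_image Finset.univ hH.eigenvalues ⟨0, Finset.mem_univ 0⟩
  refine ⟨hH.eigenvalues i₀, hS.eigenvalues_pos i₀, ?_⟩
  set ε := hH.eigenvalues i₀ with hε
  set U : Matrix (Fin m) (Fin m) ℝ := (hH.eigenvectorUnitary : Matrix (Fin m) (Fin m) ℝ) with hUdef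
  have hU : U * star U = 1 := Matrix.mem_unitaryGroup_iff.mp hH.eigenvectorUnitary.2
  have key : S - ε • 1 = U * diagonal (fun i => hH.eigenvalues i - ε) * star U := by
    have hspec : S = U * diagonal (RCLike.ofReal ∘ hH.eigenvalues) * star U := by
      conv_lhs => rw [hH.spectral_theorem, Unitary.conjStarAlgAut_apply]
    have h2 : (diagonal (fun i => hH.eigenvalues i - ε) : Matrix (Fin m) (Fin m) ℝ)
        = diagonal (RCLike.ofReal ∘ hH.eigenvalues) - diagonal (fun _ => ε) := by
      rw [← diagonal_sub]; rfl
    have h3 : (diagonal (fun _ => ε) : Matrix (Fin m) (Fin m) ℝ) = ε • 1 :=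
      (Matrix.smul_one_eq_diagonal ε).symm
    rw [h2, Matrix.mul_sub, Matrix.sub_mul, ← hspec, h3, Matrix.mul_smul,
      Matrix.mul_one, Matrix.smul_mul, hU]
  rw [key]
  have hd : (diagonal (fun i => hH.eigenvalues i - ε)).PosSemidef :=
    Matrix.PosSemidef.diagonal fun i => sub_nonneg.mpr (hi₀.2 i (Finset.mem_univ i))
  have h4 := hd.mul_mul_conjTranspose_same U
  rwa [← Matrix.star_eq_conjTranspose] at h4

lemma psd_entry_le_trace {m : ℕ} {M : Matrix (Fin m) (Fin m) ℝ} (hM : M.PosSemidef)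
    (i j : Fin m) : |M i j| ≤ M.trace := by
  have hdiag : ∀ k, 0 ≤ M k k := psd_diag_nonneg hM
  have htr : ∀ k, M k k ≤ M.trace :=
    fun k => Finset.single_le_sum (f := fun k => M k k) (fun l _ => hdiag l) (Finset.mem_univ k)
  rcases eq_or_ne i j with rfl | hij
  · rw [abs_of_nonneg (hdiag i)]; exact htr i
  · have hsym : M j i = M i j := psd_symm_entry hM.1 i j
    have hq : ∀ t : ℝ, 0 ≤ M i i + 2*t*(M i j) + t^2 * M j j := by
      intro t
      have h := hM.dotProduct_mulVec_nonneg (Pi.single i 1 + Pi.single j t)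
      simp only [dotProduct, mulVec, Pi.add_apply, Pi.single_apply, star_trivial, mul_add, add_mul,
        mul_ite, ite_mul, mul_one, one_mul, mul_zero, zero_mul, Finset.sum_add_distrib,
        Finset.sum_ite_eq', Finset.mem_univ, if_true] at h
      rw [hsym] at h
      nlinarith [h]
    have h1 := hq 1
    have h2 := hq (-1)
    have htr2 : M i i + M j j ≤ M.trace := by
      have h3 : ({i, j} : Finset (Fin m)).sum (fun k => M k k) ≤ M.trace := by
        apply Finset.sum_le_sum_of_subset_of_nonneg (Finset.subset_univ _)
        intro k _ _; exact hdiag k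
      rwa [Finset.sum_pair hij] at h3
    rw [abs_le]
    constructor <;> nlinarith [hdiag i, hdiag j]

-- kernel of a 2x3 matrix is nontrivial
lemma exists_ker_vec (C : Matrix (Fin 2) (Fin 3) ℝ) :
    ∃ x : Fin 3 → ℝ, x ≠ 0 ∧ C *ᵥ x = 0 := by
  have hrank : C.rank ≤ 2 := by
    simpa using C.rank_le_card_height
  have hker : LinearMap.ker C.mulVecLin ≠ ⊥ := by
    intro hbot
    have h1 := LinearMap.finrank_range_add_finrank_ker C.mulVecLin
    rw [hbot, finrank_bot] at h1
    have h2 : Module.finrank ℝ (Fin 3 → ℝ) = 3 := by simp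
    rw [h2] at h1
    have : C.rank = 3 := by
      simpa [Matrix.rank] using h1
    omega
  obtain ⟨x, hx, hx0⟩ := Submodule.exists_mem_ne_zero_of_ne_bot hker
  exact ⟨x, hx0, hx⟩

-- 2x2 psd quadratic form
lemma quad2_nonneg {a b d s c : ℝ} (ha : 0 ≤ a) (hd : 0 ≤ d) (hdet : 0 ≤ a*d - b^2) :
    0 ≤ a*s^2 + 2*b*s*c + d*c^2 := by
  rcases eq_or_lt_of_le ha with h | h
  · have hb : b = 0 := by nlinarith
    rw [← h, hb]
    nlinarith [mul_nonneg hd (sq_nonneg c)]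
  · nlinarith [sq_nonneg (a*s + b*c), mul_nonneg hd (sq_nonneg c)]

-- existence of the smallest positive root with nonneg diagonal on the way
lemma exists_root {lam mu al be ga : ℝ} (hl : 0 < lam) (hm : 0 < mu) {t₀ : ℝ} (ht₀ : 0 < t₀)
    (h0 : (lam + t₀*al)*(mu + t₀*be) - t₀^2*ga^2 ≤ 0) :
    ∃ ts, 0 < ts ∧ (lam+ts*al)*(mu+ts*be) - ts^2*ga^2 = 0 ∧
      0 ≤ lam+ts*al ∧ 0 ≤ mu+ts*be := by
  set f : ℝ → ℝ := fun t => (lam+t*al)*(mu+t*be) - t^2*ga^2 with hf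
  have hfc : Continuous f := by continuity
  set T : Set ℝ := {t | t ∈ Set.Icc 0 t₀ ∧ f t ≤ 0} with hT
  have hTne : T.Nonempty := ⟨t₀, ⟨le_of_lt ht₀, le_refl _⟩, h0⟩
  have hTbdd : BddBelow T := ⟨0, fun t ht => ht.1.1⟩
  have hTclosed : IsClosed T := by
    have : T = (Set.Icc 0 t₀) ∩ f ⁻¹' (Set.Iic 0) := by
      ext t; simp [hT, Set.mem_Icc, and_assoc]
    rw [this]
    exact isClosed_Icc.inter (isClosed_Iic.preimage hfc)
  set ts := sInf T with hts
  have htsT : ts ∈ T := hTclosed.csInf_mem hTne hTbdd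
  have hts_le : ∀ t, 0 ≤ t → t < ts → 0 < f t := by
    intro t ht htlt
    by_contra hle
    push_neg at hle
    have : t ∈ T := ⟨⟨ht, le_trans htlt.le htsT.1.2⟩, hle⟩
    exact absurd (csInf_le hTbdd this) (not_le.mpr htlt)
  have hts_pos : 0 < ts := by
    rcases lt_or_ge 0 ts with h | h
    · exact h
    · exfalso
      have h1 : ts = 0 := le_antisymm h htsT.1.1
      have h2 : f 0 ≤ 0 := h1 ▸ htsT.2
      have : f 0 = lam * mu := by simp [hf]
      nlinarith
  have hfts0 : f ts = 0 := by
    rcases lt_trichotomy (f ts) 0 with h | h | h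
    · exfalso
      -- continuity: f < 0 near ts, contradicting positivity below ts
      have hev : ∀ᶠ t in nhds ts, f t < 0 := hfc.continuousAt.eventually_lt continuousAt_const h
      obtain ⟨δ, hδ, hball⟩ := Metric.eventually_nhds_iff.mp hev
      set t := max 0 (ts - δ/2) with htdef
      have ht1 : 0 ≤ t := le_max_left _ _
      have ht2 : t < ts := by
        apply max_lt hts_pos
        linarith
      have ht3 : dist t ts < δ := by
        rw [Real.dist_eq, abs_lt]
        constructor
        · have : ts - δ/2 ≤ t := le_max_right _ _
          linarith
        · linarith
      exact absurd (hball ht3) (not_lt.mpr (hts_le t ht1 ht2).le)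
    · exact h
    · exact absurd htsT.2 (not_le.mpr h)
  have hdiag1 : 0 ≤ lam + ts*al := by
    by_contra hneg
    push_neg at hneg
    -- linear function lam + t*al crosses zero before ts
    have hal : al ≠ 0 := by
      intro h; rw [h] at hneg; simp at hneg; linarith
    set t₁ := -lam/al with ht₁
    have ht₁val : lam + t₁*al = 0 := by rw [ht₁, div_mul_cancel₀ _ hal]; ring
    have ht₁pos : 0 < t₁ := by
      rcases lt_trichotomy al 0 with h | h | h
      · exact div_pos_of_neg_of_neg (by linarith) h
      · exact absurd h hal
      · exfalso; nlinarith [htsT.1.1]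
    have ht₁lt : t₁ < ts := by
      rcases lt_or_ge t₁ ts with h | h
      · exact h
      · exfalso
        -- lam + t*al at ts: since t₁ = -lam/al is the unique zero and lam+ts*al<0, lam>0
        -- linear: if ts ≤ t₁ then sign... (lam + ts*al) has sign: al<0 case: lam+t*al decreasing, zero at t₁, ts ≤ t₁ ⟹ lam+ts*al ≥ 0 contradiction. al>0 impossible (shown above).
        have hal_neg : al < 0 := by
          rcases lt_trichotomy al 0 with h' | h' | h'
          · exact h'
          · exact absurd h' hal
          · exfalso; nlinarith [htsT.1.1]
        nlinarith
    have hft₁ : f t₁ ≤ 0 := by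
      have : f t₁ = (lam + t₁*al)*(mu+t₁*be) - t₁^2*ga^2 := rfl
      rw [this, ht₁val, zero_mul, zero_sub]
      nlinarith [mul_nonneg (sq_nonneg t₁) (sq_nonneg ga)]
    exact absurd (hts_le t₁ ht₁pos.le ht₁lt) (not_lt.mpr hft₁)
  have hdiag2 : 0 ≤ mu + ts*be := by
    by_contra hneg
    push_neg at hneg
    have hbe : be ≠ 0 := by
      intro h; rw [h] at hneg; simp at hneg; linarith
    set t₁ := -mu/be with ht₁
    have ht₁val : mu + t₁*be = 0 := by rw [ht₁, div_mul_cancel₀ _ hbe]; ring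
    have ht₁pos : 0 < t₁ := by
      rcases lt_trichotomy be 0 with h | h | h
      · exact div_pos_of_neg_of_neg (by linarith) h
      · exact absurd h hbe
      · exfalso; nlinarith [htsT.1.1]
    have ht₁lt : t₁ < ts := by
      rcases lt_or_ge t₁ ts with h | h
      · exact h
      · exfalso
        have hbe_neg : be < 0 := by
          rcases lt_trichotomy be 0 with h' | h' | h'
          · exact h'
          · exact absurd h' hbe
          · exfalso; nlinarith [htsT.1.1]
        nlinarith
    have hft₁ : f t₁ ≤ 0 := by
      have : f t₁ = (lam + t₁*al)*(mu+t₁*be) - t₁^2*ga^2 := rfl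
      rw [this, ht₁val, mul_zero, zero_sub]
      nlinarith [mul_nonneg (sq_nonneg t₁) (sq_nonneg ga)]
    exact absurd (hts_le t₁ ht₁pos.le ht₁lt) (not_lt.mpr hft₁)
  exact ⟨ts, hts_pos, hfts0, hdiag1, hdiag2⟩

lemma dot_mulVec_symm {m : ℕ} {M : Matrix (Fin m) (Fin m) ℝ} (hM : M.IsHermitian)
    (x y : Fin m → ℝ) : x ⬝ᵥ M *ᵥ y = (M *ᵥ x) ⬝ᵥ y := by
  rw [Matrix.dotProduct_mulVec, ← Matrix.mulVec_transpose]
  congr 1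
  have : Mᵀ = M := by
    ext i j
    simpa [conjTranspose_apply] using (congrFun (congrFun hM j) i).symm
  rw [this]

lemma quad_lower {m : ℕ} {M : Matrix (Fin m) (Fin m) ℝ} (hM : M.PosSemidef) {u v : Fin m → ℝ}
    {lam mu : ℝ} (hMu : M *ᵥ u = lam • u) (hMv : M *ᵥ v = mu • v)
    (huu : u ⬝ᵥ u = 1) (hvv : v ⬝ᵥ v = 1) (huv : u ⬝ᵥ v = 0) (w : Fin m → ℝ) :
    lam * (u ⬝ᵥ w)^2 + mu * (v ⬝ᵥ w)^2 ≤ w ⬝ᵥ M *ᵥ w := by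
  set s := u ⬝ᵥ w with hs
  set c := v ⬝ᵥ w with hc
  set w' := w - s • u - c • v with hw'
  have hMw_u : u ⬝ᵥ M *ᵥ w = lam * s := by
    rw [dot_mulVec_symm hM.1, hMu, smul_dotProduct]
    rfl
  have hMw_v : v ⬝ᵥ M *ᵥ w = mu * c := by
    rw [dot_mulVec_symm hM.1, hMv, smul_dotProduct]
    rfl
  have hw_Mu : w ⬝ᵥ M *ᵥ u = lam * s := by
    rw [hMu, dotProduct_smul, smul_eq_mul, dotProduct_comm, ← hs]
  have hw_Mv : w ⬝ᵥ M *ᵥ v = mu * c := by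
    rw [hMv, dotProduct_smul, smul_eq_mul, dotProduct_comm, ← hc]
  have hvu : v ⬝ᵥ u = 0 := by rw [dotProduct_comm]; exact huv
  have h0 : 0 ≤ w' ⬝ᵥ M *ᵥ w' := by
    have := hM.dotProduct_mulVec_nonneg w'
    simpa using this
  have hexp : w' ⬝ᵥ M *ᵥ w' = w ⬝ᵥ M *ᵥ w - lam*s^2 - mu*c^2 := by
    rw [hw']
    simp only [Matrix.mulVec_sub, Matrix.mulVec_smul, sub_dotProduct,
      dotProduct_sub, smul_dotProduct, dotProduct_smul,
      hMu, hMv, smul_eq_mul, smul_smul]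
    simp only [dotProduct_smul, smul_eq_mul, hMw_u, hMw_v, hw_Mu, hw_Mv]
    rw [dotProduct_comm w u, dotProduct_comm w v, ← hs, ← hc, huu, hvv, huv, hvu]
    ring
  nlinarith [h0, hexp]

def sdpFeas (A : Matrix (Fin 3) (Fin 3) ℝ) (p₁ p₂ : ℝ) (M : Matrix (Fin 3) (Fin 3) ℝ) : Prop :=
  M.PosSemidef ∧ ip (sdpMat A 0) M = -p₁ ∧ ip (sdpMat A 1) M = -p₂

lemma vecMulVec_mulVec' (u v z : Fin 3 → ℝ) : vecMulVec u v *ᵥ z = (v ⬝ᵥ z) • u := by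
  funext k
  simp [vecMulVec, mulVec, dotProduct, Finset.mul_sum, mul_assoc, mul_comm, mul_left_comm]

set_option maxHeartbeats 2000000 in
lemma rank_reduce (A : Matrix (Fin 3) (Fin 3) ℝ) (p₁ p₂ : ℝ)
    (M : Matrix (Fin 3) (Fin 3) ℝ) (hfeas : sdpFeas A p₁ p₂ M)
    (hopt : ∀ N, sdpFeas A p₁ p₂ N → ip (sdpMat A 2) N ≤ ip (sdpMat A 2) M)
    (hrk : 1 < M.rank) :
    ∃ M', sdpFeas A p₁ p₂ M' ∧
      (∀ N, sdpFeas A p₁ p₂ N → ip (sdpMat A 2) N ≤ ip (sdpMat A 2) M') ∧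
      M'.rank < M.rank := by
  obtain ⟨hMpsd, hc1, hc2⟩ := hfeas
  have hH := hMpsd.1
  -- two positive eigenvalues
  obtain ⟨i, j, hij, hli, hlj⟩ : ∃ i j, i ≠ j ∧ 0 < hH.eigenvalues i ∧ 0 < hH.eigenvalues j := by
    rw [hH.rank_eq_card_non_zero_eigs] at hrk
    have := Fintype.one_lt_card_iff_nontrivial.mp hrk
    obtain ⟨a, b, hab⟩ := exists_pair_ne {k // hH.eigenvalues k ≠ 0}
    exact ⟨a.1, b.1, fun h => hab (Subtype.ext h),
      lt_of_le_of_ne (hMpsd.eigenvalues_nonneg a.1) (Ne.symm a.2),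
      lt_of_le_of_ne (hMpsd.eigenvalues_nonneg b.1) (Ne.symm b.2)⟩
  set lam := hH.eigenvalues i with hlam
  set mu := hH.eigenvalues j with hmu
  set u : Fin 3 → ℝ := ⇑(hH.eigenvectorBasis i) with hu
  set v : Fin 3 → ℝ := ⇑(hH.eigenvectorBasis j) with hv
  have hMu : M *ᵥ u = lam • u := hH.mulVec_eigenvectorBasis i
  have hMv : M *ᵥ v = mu • v := hH.mulVec_eigenvectorBasis j
  have huu : u ⬝ᵥ u = 1 := by
    have h := hH.eigenvectorBasis.orthonormal.1 i
    have h2 : (inner ℝ (hH.eigenvectorBasis i) (hH.eigenvectorBasis i) : ℝ) = 1 := by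
      rw [real_inner_self_eq_norm_sq, h]; norm_num
    rw [PiLp.inner_apply] at h2
    simpa [dotProduct, hu, hv, pow_two] using h2
  have hvv : v ⬝ᵥ v = 1 := by
    have h := hH.eigenvectorBasis.orthonormal.1 j
    have h2 : (inner ℝ (hH.eigenvectorBasis j) (hH.eigenvectorBasis j) : ℝ) = 1 := by
      rw [real_inner_self_eq_norm_sq, h]; norm_num
    rw [PiLp.inner_apply] at h2
    simpa [dotProduct, hu, hv, pow_two] using h2
  have huv : u ⬝ᵥ v = 0 := by
    have h : (inner ℝ (hH.eigenvectorBasis i) (hH.eigenvectorBasis j) : ℝ) = 0 :=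
      hH.eigenvectorBasis.orthonormal.2 hij
    rw [PiLp.inner_apply] at h
    simpa [dotProduct, hu, hv, mul_comm] using h
  have hvu : v ⬝ᵥ u = 0 := by rw [dotProduct_comm]; exact huv
  -- the three basis perturbation matrices
  set P1 : Matrix (Fin 3) (Fin 3) ℝ := vecMulVec u u with hP1
  set P2 : Matrix (Fin 3) (Fin 3) ℝ := vecMulVec v v with hP2
  set P3 : Matrix (Fin 3) (Fin 3) ℝ := vecMulVec u v + vecMulVec v u with hP3
  set C : Matrix (Fin 2) (Fin 3) ℝ := Matrix.of
    ![![ip (sdpMat A 0) P1, ip (sdpMat A 0) P2, ip (sdpMat A 0) P3],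
      ![ip (sdpMat A 1) P1, ip (sdpMat A 1) P2, ip (sdpMat A 1) P3]] with hC
  -- a nonzero kernel vector, normalized so that a nonpositive point of f is at positive time
  have hker : ∃ y : Fin 3 → ℝ, y ≠ 0 ∧ C *ᵥ y = 0 ∧
      ∃ t₀ : ℝ, 0 < t₀ ∧
        (lam + t₀ * y 0) * (mu + t₀ * y 1) - t₀^2 * (y 2)^2 ≤ 0 := by
    obtain ⟨x, hx0, hxker⟩ := exists_ker_vec C
    have hroot : ∃ t₀ : ℝ, t₀ ≠ 0 ∧
        (lam + t₀ * x 0) * (mu + t₀ * x 1) - t₀^2 * (x 2)^2 ≤ 0 := by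
      by_cases h0 : x 0 ≠ 0
      · refine ⟨-lam / x 0, div_ne_zero (neg_ne_zero.mpr (ne_of_gt hli)) h0, ?_⟩
        have : lam + (-lam / x 0) * x 0 = 0 := by rw [div_mul_cancel₀ _ h0]; ring
        rw [this, zero_mul, zero_sub]
        nlinarith [mul_nonneg (sq_nonneg (-lam / x 0)) (sq_nonneg (x 2))]
      · by_cases h1 : x 1 ≠ 0
        · refine ⟨-mu / x 1, div_ne_zero (neg_ne_zero.mpr (ne_of_gt hlj)) h1, ?_⟩
          have : mu + (-mu / x 1) * x 1 = 0 := by rw [div_mul_cancel₀ _ h1]; ring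
          rw [this, mul_zero, zero_sub]
          nlinarith [mul_nonneg (sq_nonneg (-mu / x 1)) (sq_nonneg (x 2))]
        · push_neg at h0 h1
          have h2 : x 2 ≠ 0 := by
            intro h2
            apply hx0
            funext k
            fin_cases k <;> simp [h0, h1, h2]
          have hs : Real.sqrt (lam*mu) ^ 2 = lam * mu :=
            Real.sq_sqrt (by positivity)
          refine ⟨Real.sqrt (lam * mu) / x 2,
            div_ne_zero (by positivity) h2, ?_⟩
          have key : (Real.sqrt (lam*mu) / x 2)^2 * (x 2)^2 = lam * mu := by
            rw [div_pow, div_mul_cancel₀ _ (pow_ne_zero 2 h2), hs]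
          rw [h0, h1]
          simp only [mul_zero, add_zero]
          linarith [key]
    obtain ⟨t₀, ht₀ne, ht₀⟩ := hroot
    rcases lt_or_gt_of_ne ht₀ne with hneg | hpos
    · refine ⟨-x, by simpa using hx0, by rw [Matrix.mulVec_neg, hxker, neg_zero], -t₀, by linarith, ?_⟩
      have e0 : (-x) 0 = -(x 0) := rfl
      have e1 : (-x) 1 = -(x 1) := rfl
      have e2 : (-x) 2 = -(x 2) := rfl
      rw [e0, e1, e2]
      nlinarith [ht₀]
    · exact ⟨x, hx0, hxker, t₀, hpos, ht₀⟩
  obtain ⟨y, hy0, hyker, t₀, ht₀pos, ht₀⟩ := hker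
  set D : Matrix (Fin 3) (Fin 3) ℝ := y 0 • P1 + y 1 • P2 + y 2 • P3 with hD
  -- constraint values of D vanish
  have hCy0 := congrFun hyker 0
  have hCy1 := congrFun hyker 1
  simp only [hC, Matrix.mulVec, dotProduct, Fin.sum_univ_three, Matrix.of_apply,
    Matrix.cons_val', Matrix.cons_val_zero, Matrix.cons_val_one, Matrix.head_cons,
    Matrix.empty_val', Matrix.cons_val_fin_one, Matrix.head_fin_const, Pi.zero_apply,
    Matrix.cons_val_two, Matrix.tail_cons] at hCy0 hCy1
  have hipD0 : ip (sdpMat A 0) D = 0 := by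
    rw [hD, ip_add_right, ip_add_right, ip_smul_right, ip_smul_right, ip_smul_right]
    linear_combination hCy0
  have hipD1 : ip (sdpMat A 1) D = 0 := by
    rw [hD, ip_add_right, ip_add_right, ip_smul_right, ip_smul_right, ip_smul_right]
    linear_combination hCy1
  -- action of D
  have hDmul : ∀ z, D *ᵥ z = (y 0 * (u ⬝ᵥ z) + y 2 * (v ⬝ᵥ z)) • u
      + (y 1 * (v ⬝ᵥ z) + y 2 * (u ⬝ᵥ z)) • v := by
    intro z
    rw [hD, hP1, hP2, hP3, Matrix.add_mulVec, Matrix.add_mulVec, Matrix.smul_mulVec,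
      Matrix.smul_mulVec, Matrix.smul_mulVec, Matrix.add_mulVec,
      vecMulVec_mulVec', vecMulVec_mulVec', vecMulVec_mulVec', vecMulVec_mulVec']
    module
  have hDquad : ∀ w, w ⬝ᵥ D *ᵥ w = y 0 * (u ⬝ᵥ w)^2 + y 1 * (v ⬝ᵥ w)^2
      + 2 * y 2 * (u ⬝ᵥ w) * (v ⬝ᵥ w) := by
    intro w
    rw [hDmul w, dotProduct_add, dotProduct_smul, dotProduct_smul, dotProduct_comm w u,
      dotProduct_comm w v]
    simp only [smul_eq_mul]
    ring
  have hDherm : D.IsHermitian := by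
    rw [Matrix.IsHermitian]
    ext k l
    simp only [hD, hP1, hP2, hP3, conjTranspose_apply, Matrix.add_apply, Matrix.smul_apply,
      vecMulVec_apply, smul_eq_mul, star_trivial]
    ring
  have hMtherm : ∀ t : ℝ, (M + t • D).IsHermitian := by
    intro t
    have : (M + t • D)ᴴ = M + t • D := by
      rw [conjTranspose_add, conjTranspose_smul, hH.eq, hDherm.eq, star_trivial]
    exact this
  have hMt_psd : ∀ t : ℝ, 0 ≤ lam + t * y 0 → 0 ≤ mu + t * y 1 →
      0 ≤ (lam + t * y 0) * (mu + t * y 1) - (t * y 2)^2 → (M + t • D).PosSemidef := by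
    intro t h1 h2 h3
    refine PosSemidef.of_dotProduct_mulVec_nonneg (hMtherm t) fun w => ?_
    have hq := quad_lower hMpsd hMu hMv huu hvv huv w
    have hd := hDquad w
    have hkey := quad2_nonneg (a := lam + t * y 0) (b := t * y 2) (d := mu + t * y 1)
        (s := u ⬝ᵥ w) (c := v ⬝ᵥ w) h1 h2 (by nlinarith [h3])
    have hsplit : w ⬝ᵥ (M + t • D) *ᵥ w = w ⬝ᵥ M *ᵥ w + t * (w ⬝ᵥ D *ᵥ w) := by
      rw [Matrix.add_mulVec, dotProduct_add, Matrix.smul_mulVec, dotProduct_smul,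
        smul_eq_mul]
    rw [star_trivial, hsplit, hd]
    nlinarith [hq, hkey]
  have hfeasMt : ∀ t : ℝ, (M + t • D).PosSemidef → sdpFeas A p₁ p₂ (M + t • D) := by
    intro t hpsd
    refine ⟨hpsd, ?_, ?_⟩
    · rw [ip_add_right, ip_smul_right, hipD0, mul_zero, add_zero, hc1]
    · rw [ip_add_right, ip_smul_right, hipD1, mul_zero, add_zero, hc2]
  have hobjMt : ∀ t : ℝ, ip (sdpMat A 2) (M + t • D)
      = ip (sdpMat A 2) M + t * ip (sdpMat A 2) D := by
    intro t; rw [ip_add_right, ip_smul_right]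
  -- a small two-sided interval of feasibility
  set B := |y 0| + |y 1| + |y 2| + 1 with hB
  have hBpos : 0 < B := by positivity
  have hy0B : |y 0| ≤ B := by nlinarith [abs_nonneg (y 1), abs_nonneg (y 2)]
  have hy1B : |y 1| ≤ B := by nlinarith [abs_nonneg (y 0), abs_nonneg (y 2)]
  have hy2B : |y 2| ≤ B := by nlinarith [abs_nonneg (y 0), abs_nonneg (y 1)]
  set ε := min (min (lam / (2*B)) (mu / (2*B))) (Real.sqrt (lam*mu) / (2*B)) with hε
  have hεpos : 0 < ε := by
    apply lt_min (lt_min (by positivity) (by positivity)) (by positivity)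
  have hcond : ∀ t : ℝ, |t| ≤ ε → (0 ≤ lam + t * y 0 ∧ 0 ≤ mu + t * y 1 ∧
      0 ≤ (lam + t * y 0) * (mu + t * y 1) - (t * y 2)^2) := by
    intro t ht
    have hε1 : ε ≤ lam/(2*B) := le_trans (min_le_left _ _) (min_le_left _ _)
    have hε2 : ε ≤ mu/(2*B) := le_trans (min_le_left _ _) (min_le_right _ _)
    have hε3 : ε ≤ Real.sqrt (lam*mu)/(2*B) := min_le_right _ _
    have habs : ∀ k : Fin 3, |t * y k| ≤ ε * B := by
      intro k
      rw [abs_mul]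
      apply mul_le_mul ht _ (abs_nonneg _) (le_of_lt hεpos)
      fin_cases k
      · exact hy0B
      · exact hy1B
      · exact hy2B
    have h1' : lam / 2 ≤ lam + t * y 0 := by
      have h5 := habs 0
      have h6 : ε * B ≤ lam / 2 := by
        calc ε * B ≤ (lam/(2*B)) * B := by nlinarith
        _ = lam/2 := by field_simp
      nlinarith [neg_abs_le (t * y 0)]
    have h2' : mu / 2 ≤ mu + t * y 1 := by
      have h5 := habs 1
      have h6 : ε * B ≤ mu / 2 := by
        calc ε * B ≤ (mu/(2*B)) * B := by nlinarith
        _ = mu/2 := by field_simp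
      nlinarith [neg_abs_le (t * y 1)]
    have h3' : (t * y 2)^2 ≤ lam * mu / 4 := by
      have h5 := habs 2
      have h6 : ε * B ≤ Real.sqrt (lam*mu) / 2 := by
        calc ε * B ≤ (Real.sqrt (lam*mu)/(2*B)) * B := by nlinarith
        _ = Real.sqrt (lam*mu)/2 := by field_simp
      have h7 : |t * y 2| ≤ Real.sqrt (lam*mu)/2 := le_trans h5 h6
      have h8 : Real.sqrt (lam*mu)^2 = lam*mu := Real.sq_sqrt (by positivity)
      nlinarith [sq_abs (t * y 2), abs_nonneg (t * y 2), Real.sqrt_nonneg (lam*mu)]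
    exact ⟨by linarith, by linarith, by nlinarith [h1', h2', h3']⟩
  have hψ : ∀ t : ℝ, |t| ≤ ε → (M + t • D).PosSemidef := by
    intro t ht
    obtain ⟨h1, h2, h3⟩ := hcond t ht
    exact hMt_psd t h1 h2 h3
  -- optimality forces the objective direction to vanish
  have hip2D : ip (sdpMat A 2) D = 0 := by
    have hp := hopt _ (hfeasMt ε (hψ ε (by rw [abs_of_pos hεpos])))
    have hm := hopt _ (hfeasMt (-ε) (hψ (-ε) (by rw [abs_neg, abs_of_pos hεpos])))
    rw [hobjMt] at hp hm
    have h5 : ε * ip (sdpMat A 2) D = 0 := le_antisymm (by linarith) (by linarith)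
    rcases mul_eq_zero.mp h5 with h | h
    · exact absurd h (ne_of_gt hεpos)
    · exact h
  -- move to the boundary
  obtain ⟨ts, hts_pos, hts_root, hts_d1, hts_d2⟩ := exists_root hli hlj ht₀pos ht₀
  set M' := M + ts • D with hM'def
  have hM'psd : M'.PosSemidef := hMt_psd ts hts_d1 hts_d2 (le_of_eq (by linear_combination -hts_root))
  have hM'feas : sdpFeas A p₁ p₂ M' := hfeasMt ts hM'psd
  have hM'obj : ip (sdpMat A 2) M' = ip (sdpMat A 2) M := by
    rw [hM'def, hobjMt, hip2D, mul_zero, add_zero]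
  refine ⟨M', hM'feas, fun N hN => (hopt N hN).trans hM'obj.ge, ?_⟩
  -- rank strictly decreases
  have hdet : (lam + ts * y 0) * (mu + ts * y 1) - (ts * y 2)^2 = 0 := by
    linear_combination hts_root
  have hscex : ∃ s c : ℝ, ¬(s = 0 ∧ c = 0) ∧
      (lam + ts * y 0)*s + (ts * y 2)*c = 0 ∧
      (ts * y 2)*s + (mu + ts * y 1)*c = 0 := by
    by_cases hab : (lam + ts * y 0) = 0 ∧ (ts * y 2) = 0
    · exact ⟨1, 0, by simp, by simp [hab.1, hab.2], by simp [hab.1, hab.2]⟩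
    · refine ⟨-(ts * y 2), lam + ts * y 0, ?_, by ring, by linear_combination hdet⟩
      intro hsc
      exact hab ⟨hsc.2, neg_eq_zero.mp hsc.1⟩
  obtain ⟨s, c, hsc, hQ1, hQ2⟩ := hscex
  set w0 : Fin 3 → ℝ := s • u + c • v with hw0
  have huw0 : u ⬝ᵥ w0 = s := by
    rw [hw0, dotProduct_add, dotProduct_smul, dotProduct_smul, huu, huv]
    simp
  have hvw0 : v ⬝ᵥ w0 = c := by
    rw [hw0, dotProduct_add, dotProduct_smul, dotProduct_smul, hvu, hvv]
    simp
  have hMw0 : M *ᵥ w0 = (lam*s) • u + (mu*c) • v := by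
    rw [hw0, Matrix.mulVec_add, Matrix.mulVec_smul, Matrix.mulVec_smul, hMu, hMv,
      smul_smul, smul_smul, mul_comm s lam, mul_comm c mu]
  have hM'w0 : M' *ᵥ w0 = 0 := by
    rw [hM'def, Matrix.add_mulVec, Matrix.smul_mulVec, hMw0, hDmul w0, huw0, hvw0]
    have key : (lam*s) • u + (mu*c) • v + ts • ((y 0 * s + y 2 * c) • u + (y 1 * c + y 2 * s) • v)
        = ((lam + ts * y 0)*s + (ts * y 2)*c) • u + ((ts * y 2)*s + (mu + ts * y 1)*c) • v := by
      module
    rw [key, hQ1, hQ2]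
    simp
  have hMw0ne : M *ᵥ w0 ≠ 0 := by
    intro h
    have h1 : u ⬝ᵥ (M *ᵥ w0) = lam * s := by
      rw [hMw0, dotProduct_add, dotProduct_smul, dotProduct_smul, huu, huv]
      simp
    have h2 : v ⬝ᵥ (M *ᵥ w0) = mu * c := by
      rw [hMw0, dotProduct_add, dotProduct_smul, dotProduct_smul, hvu, hvv]
      simp
    rw [h, dotProduct_zero] at h1 h2
    exact hsc ⟨(mul_eq_zero.mp h1.symm).resolve_left (ne_of_gt hli),
      (mul_eq_zero.mp h2.symm).resolve_left (ne_of_gt hlj)⟩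
  have hker_le : LinearMap.ker M.mulVecLin ≤ LinearMap.ker M'.mulVecLin := by
    intro z hz
    rw [LinearMap.mem_ker, Matrix.mulVecLin_apply] at hz ⊢
    have huz : u ⬝ᵥ z = 0 := by
      have h4 : (M *ᵥ u) ⬝ᵥ z = 0 := by
        rw [← dot_mulVec_symm hH u z, hz, dotProduct_zero]
      rw [hMu, smul_dotProduct, smul_eq_mul] at h4
      exact (mul_eq_zero.mp h4).resolve_left (ne_of_gt hli)
    have hvz : v ⬝ᵥ z = 0 := by
      have h4 : (M *ᵥ v) ⬝ᵥ z = 0 := by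
        rw [← dot_mulVec_symm hH v z, hz, dotProduct_zero]
      rw [hMv, smul_dotProduct, smul_eq_mul] at h4
      exact (mul_eq_zero.mp h4).resolve_left (ne_of_gt hlj)
    rw [hM'def, Matrix.add_mulVec, Matrix.smul_mulVec, hz, hDmul z, huz, hvz]
    simp
  have hw0_ker : w0 ∈ LinearMap.ker M'.mulVecLin := by
    rw [LinearMap.mem_ker, Matrix.mulVecLin_apply]
    exact hM'w0
  have hw0_not : w0 ∉ LinearMap.ker M.mulVecLin := by
    rw [LinearMap.mem_ker, Matrix.mulVecLin_apply]
    exact hMw0ne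
  have hlt : LinearMap.ker M.mulVecLin < LinearMap.ker M'.mulVecLin :=
    lt_of_le_not_ge hker_le (fun hle => hw0_not (hle hw0_ker))
  have hfr : Module.finrank ℝ (LinearMap.ker M.mulVecLin)
      < Module.finrank ℝ (LinearMap.ker M'.mulVecLin) :=
    Submodule.finrank_lt_finrank_of_lt hlt
  have hr1 := LinearMap.finrank_range_add_finrank_ker M.mulVecLin
  have hr2 := LinearMap.finrank_range_add_finrank_ker M'.mulVecLin
  have h3fin : Module.finrank ℝ (Fin 3 → ℝ) = 3 := by simp
  rw [h3fin] at hr1 hr2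
  have e1 : M.rank = Module.finrank ℝ (LinearMap.range M.mulVecLin) := rfl
  have e2 : M'.rank = Module.finrank ℝ (LinearMap.range M'.mulVecLin) := rfl
  omega

lemma ip_cont {m : ℕ} (X : Matrix (Fin m) (Fin m) ℝ) :
    Continuous fun M : Matrix (Fin m) (Fin m) ℝ => ip X M := by
  simp only [ip, Matrix.trace, Matrix.diag, Matrix.mul_apply]
  exact continuous_finset_sum _ fun k _ => continuous_finset_sum _ fun l _ =>
    continuous_const.mul ((continuous_apply k).comp (continuous_apply l))

lemma box_compact {m : ℕ} (R : ℝ) :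
    IsCompact {M : Matrix (Fin m) (Fin m) ℝ | ∀ i j, M i j ∈ Set.Icc (-R) R} := by
  have h1 : {M : Matrix (Fin m) (Fin m) ℝ | ∀ i j, M i j ∈ Set.Icc (-R) R} =
      Set.univ.pi (fun _ : Fin m => Set.univ.pi fun _ : Fin m => Set.Icc (-R) R) := by
    ext M
    exact ⟨fun h i _ j _ => h i j, fun h i j => h i (Set.mem_univ i) j (Set.mem_univ j)⟩
  rw [h1]
  exact isCompact_univ_pi fun i => isCompact_univ_pi fun j => isCompact_Icc

lemma psd_closed {m : ℕ} : IsClosed {M : Matrix (Fin m) (Fin m) ℝ | M.PosSemidef} := by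
  have h1 : {M : Matrix (Fin m) (Fin m) ℝ | M.PosSemidef} =
      (⋂ i, ⋂ j, {M : Matrix (Fin m) (Fin m) ℝ | M i j = M j i}) ∩
      ⋂ x : Fin m → ℝ, {M | 0 ≤ x ⬝ᵥ M *ᵥ x} := by
    ext M
    constructor
    · intro hM
      refine ⟨Set.mem_iInter.mpr fun i => Set.mem_iInter.mpr fun j => ?_,
        Set.mem_iInter.mpr fun x => ?_⟩
      · show M i j = M j i
        have h2 := congrFun (congrFun hM.1 i) j
        rw [conjTranspose_apply, star_trivial] at h2
        exact h2.symm
      · show 0 ≤ x ⬝ᵥ M *ᵥ x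
        simpa using hM.dotProduct_mulVec_nonneg x
    · intro ⟨h2, h3⟩
      simp only [Set.mem_iInter, Set.mem_setOf_eq] at h2 h3
      refine PosSemidef.of_dotProduct_mulVec_nonneg ?_ ?_
      · ext i j
        rw [conjTranspose_apply, star_trivial]
        exact h2 j i
      · intro x
        simpa using h3 x
  rw [h1]
  refine IsClosed.inter (isClosed_iInter fun i => isClosed_iInter fun j => ?_)
    (isClosed_iInter fun x => ?_)
  · exact isClosed_eq ((continuous_apply j).comp (continuous_apply i))
      ((continuous_apply i).comp (continuous_apply j))
  · have hc : Continuous fun M : Matrix (Fin m) (Fin m) ℝ => x ⬝ᵥ M *ᵥ x := by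
      simp only [dotProduct, Matrix.mulVec]
      exact continuous_finset_sum _ fun k _ => Continuous.mul continuous_const
        (continuous_finset_sum _ fun l _ =>
          Continuous.mul ((continuous_apply l).comp (continuous_apply k)) continuous_const)
    exact isClosed_le continuous_const hc

lemma exists_opt (A : Matrix (Fin 3) (Fin 3) ℝ) (hA : (-(A + Aᵀ)).PosDef) (p₁ p₂ : ℝ)
    (hp₁ : 0 ≤ p₁) (hp₂ : 0 ≤ p₂) :
    ∃ M₀, sdpFeas A p₁ p₂ M₀ ∧
      ∀ N, sdpFeas A p₁ p₂ N → ip (sdpMat A 2) N ≤ ip (sdpMat A 2) M₀ := by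
  set S := -(A + Aᵀ) with hSdef
  have hAdiag : ∀ i : Fin 3, A i i < 0 := by
    intro i
    have hne : (Pi.single i 1 : Fin 3 → ℝ) ≠ 0 := by
      intro h
      have := congrFun h i
      simp [Pi.single_apply] at this
    have h := hA.dotProduct_mulVec_pos hne
    have h2 : star (Pi.single i 1 : Fin 3 → ℝ) ⬝ᵥ S *ᵥ Pi.single i 1 = S i i := by
      simp [dotProduct, mulVec, Pi.single_apply]
    rw [h2] at h
    have h3 : S i i = -(A i i + A i i) := by
      simp [hSdef, Matrix.neg_apply, Matrix.add_apply, Matrix.transpose_apply]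
    rw [h3] at h
    linarith
  set d : Fin 3 → ℝ := ![p₁ / (-2 * A 0 0), p₂ / (-2 * A 1 1), 0] with hd_def
  have hd : ∀ i, 0 ≤ d i := by
    intro i
    have h0 := hAdiag 0
    have h1 := hAdiag 1
    fin_cases i
    · exact div_nonneg hp₁ (by linarith)
    · exact div_nonneg hp₂ (by linarith)
    · exact le_refl 0
  set Mf : Matrix (Fin 3) (Fin 3) ℝ := diagonal d with hMf
  have hMfpsd : Mf.PosSemidef := PosSemidef.diagonal hd
  have hipMf : ∀ k : Fin 3, ip (sdpMat A k) Mf = A k k * (2 * d k) := by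
    intro k
    rw [ip_sdpMat]
    refine (Finset.sum_eq_single k ?_ ?_).trans ?_
    · intro l _ hlk
      rw [hMf, diagonal_apply_ne _ hlk, diagonal_apply_ne' _ hlk]
      ring
    · intro h
      exact absurd (Finset.mem_univ k) h
    · rw [hMf, diagonal_apply_eq]
      ring
  have hMfc1 : ip (sdpMat A 0) Mf = -p₁ := by
    rw [hipMf 0]
    have h00 := (hAdiag 0).ne
    have : d 0 = p₁ / (-2 * A 0 0) := rfl
    rw [this]
    field_simp
  have hMfc2 : ip (sdpMat A 1) Mf = -p₂ := by
    rw [hipMf 1]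
    have h11 := (hAdiag 1).ne
    have : d 1 = p₂ / (-2 * A 1 1) := rfl
    rw [this]
    field_simp
  have hMffeas : sdpFeas A p₁ p₂ Mf := ⟨hMfpsd, hMfc1, hMfc2⟩
  set c₀ := ip (sdpMat A 2) Mf with hc₀
  obtain ⟨ε, hεpos, hSps⟩ := exists_eps hA
  set R := (p₁ + p₂ - c₀) / ε with hR
  have hbound : ∀ N, sdpFeas A p₁ p₂ N → c₀ ≤ ip (sdpMat A 2) N → ∀ i j, |N i j| ≤ R := by
    intro N hN hNobj i j
    obtain ⟨hNpsd, hN1, hN2⟩ := hN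
    have hsum := sum_ip_sdpMat A N
    have hSM : (S * N).trace = -(((A + Aᵀ) * N).trace) := by
      rw [hSdef, Matrix.neg_mul, trace_neg]
    have htr : ε * N.trace ≤ (S * N).trace := by
      have h1 := psd_trace_mul_nonneg hSps hNpsd
      have h2 : ((S - ε • 1) * N).trace = (S * N).trace - ε * N.trace := by
        rw [Matrix.sub_mul, trace_sub, Matrix.smul_mul, Matrix.one_mul, trace_smul, smul_eq_mul]
      linarith
    have hSNle : (S * N).trace ≤ p₁ + p₂ - c₀ := by
      rw [hN1, hN2] at hsum
      linarith [hNobj]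
    have htrN : N.trace ≤ R := by
      rw [hR, le_div_iff₀ hεpos]
      nlinarith
    exact (psd_entry_le_trace hNpsd i j).trans htrN
  set K := {N | sdpFeas A p₁ p₂ N ∧ c₀ ≤ ip (sdpMat A 2) N} with hK
  have hKsub : K ⊆ {N : Matrix (Fin 3) (Fin 3) ℝ | ∀ i j, N i j ∈ Set.Icc (-R) R} := by
    rintro N ⟨hN, hNo⟩ i j
    have h := hbound N hN hNo i j
    rw [abs_le] at h
    exact ⟨h.1, h.2⟩
  have hKclosed : IsClosed K := by
    have h1 : K = (({N : Matrix (Fin 3) (Fin 3) ℝ | N.PosSemidef} ∩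
        {N | ip (sdpMat A 0) N = -p₁}) ∩ {N | ip (sdpMat A 1) N = -p₂}) ∩
        {N | c₀ ≤ ip (sdpMat A 2) N} := by
      ext N
      simp only [hK, Set.mem_setOf_eq, Set.mem_inter_iff, sdpFeas]
      tauto
    rw [h1]
    exact (((psd_closed.inter (isClosed_eq (ip_cont _) continuous_const)).inter
      (isClosed_eq (ip_cont _) continuous_const)).inter
      (isClosed_le continuous_const (ip_cont _)))
  have hKcompact : IsCompact K := (box_compact R).of_isClosed_subset hKclosed hKsub
  have hKne : K.Nonempty := ⟨Mf, hMffeas, le_refl _⟩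
  obtain ⟨M₀, hM₀K, hM₀max⟩ := hKcompact.exists_isMaxOn hKne ((ip_cont (sdpMat A 2)).continuousOn)
  refine ⟨M₀, hM₀K.1, fun N hN => ?_⟩
  rcases le_or_gt c₀ (ip (sdpMat A 2) N) with h | h
  · exact hM₀max ⟨hN, h⟩
  · have h2 : c₀ ≤ ip (sdpMat A 2) M₀ := hM₀K.2
    linarith

/-- For a 3×3 matrix `A` with `A + Aᵀ` negative definite, the associated semidefinite
program (maximize `⟨A₃, M⟩` over `M ⪰ 0` with `⟨A₁, M⟩ = -p₁`, `⟨A₂, M⟩ = -p₂`) has an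
optimal solution of rank at most 1. -/
theorem sdp_three_by_three_rank_one_optimal (A : Matrix (Fin 3) (Fin 3) ℝ)
    (hA : (-(A + Aᵀ)).PosDef) (p₁ p₂ : ℝ) (hp₁ : 0 ≤ p₁) (hp₂ : 0 ≤ p₂) :
    ∃ M₀ : Matrix (Fin 3) (Fin 3) ℝ, M₀.PosSemidef ∧
      ip (sdpMat A 0) M₀ = -p₁ ∧ ip (sdpMat A 1) M₀ = -p₂ ∧
      M₀.rank ≤ 1 ∧
      ∀ M : Matrix (Fin 3) (Fin 3) ℝ, M.PosSemidef →
        ip (sdpMat A 0) M = -p₁ → ip (sdpMat A 1) M = -p₂ →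
        ip (sdpMat A 2) M ≤ ip (sdpMat A 2) M₀ := by
  obtain ⟨M, hMfeas, hMopt⟩ := exists_opt A hA p₁ p₂ hp₁ hp₂
  have key : ∀ r : ℕ, ∀ M, sdpFeas A p₁ p₂ M →
      (∀ N, sdpFeas A p₁ p₂ N → ip (sdpMat A 2) N ≤ ip (sdpMat A 2) M) → M.rank ≤ r →
      ∃ M₀, sdpFeas A p₁ p₂ M₀ ∧
        (∀ N, sdpFeas A p₁ p₂ N → ip (sdpMat A 2) N ≤ ip (sdpMat A 2) M₀) ∧ M₀.rank ≤ 1 := by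
    intro r
    induction r with
    | zero => exact fun M hf ho hr => ⟨M, hf, ho, hr.trans (by norm_num)⟩
    | succ n ih =>
      intro M hf ho hr
      by_cases h1 : M.rank ≤ 1
      · exact ⟨M, hf, ho, h1⟩
      · push_neg at h1
        obtain ⟨M', hf', ho', hlt⟩ := rank_reduce A p₁ p₂ M hf ho h1
        exact ih M' hf' ho' (by omega)
  obtain ⟨M₀, hf, ho, hr⟩ := key M.rank M hMfeas hMopt (le_refl _)
  exact ⟨M₀, hf.1, hf.2.1, hf.2.2, hr, fun N hN h1 h2 => ho N ⟨hN, h1, h2⟩⟩
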